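/- Let n ≥ 1, let ν ≥ 4 be a real number, let r₀ > 0, and let H : [r₀, ∞) → Mₙ(ℝ) be continuous with H(r) = O(r^{−ν}) as r → ∞. Let Y : [r₀, ∞) → Mₙ(ℝ) be twice differentiable with Y''(r) = −H(r)·Y(r) for all r ≥ r₀, and let F = lim_{r→∞} Y'(r) (which exists). If F is invertible, then Y(r) is invertible for all sufficiently large r, and the matrix L(r) := Y'(r)·Y(r)⁻¹ satisfies L(r) = (1/r)·I + O(r⁻²) as r → ∞, where I denotes the n×n identity matrix. -/

import Mathlib

open Filter Asymptotics Set

attribute [local instance] Matrix.normedAddCommGroup Matrix.normedSpace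

lemma matrix_norm_mul_le {n : ℕ} (A B : Matrix (Fin n) (Fin n) ℝ) :
    ‖A * B‖ ≤ n * ‖A‖ * ‖B‖ := by
  rw [Matrix.norm_le_iff (by positivity)]
  intro i j
  rw [Matrix.mul_apply]
  calc ‖∑ k, A i k * B k j‖ ≤ ∑ k, ‖A i k * B k j‖ := norm_sum_le _ _
    _ ≤ ∑ _k : Fin n, ‖A‖ * ‖B‖ := by
        refine Finset.sum_le_sum fun k _ => ?_
        rw [norm_mul]
        exact mul_le_mul (Matrix.norm_entry_le_entrywise_sup_norm A)
          (Matrix.norm_entry_le_entrywise_sup_norm B) (norm_nonneg _) (norm_nonneg _)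
    _ = n * ‖A‖ * ‖B‖ := by simp [Finset.sum_const, mul_assoc]

lemma optical_final_bound (n : ℕ) (r C₂ c₁ b : ℝ) (hr1 : 1 ≤ r) (hC₂0 : 0 ≤ C₂) (hb0 : 0 ≤ b)
    (Y'r F Vi Fi Wr Yinv : Matrix (Fin n) (Fin n) ℝ)
    (hY'F : ‖Y'r - F‖ ≤ C₂ * (r⁻¹ * r⁻¹))
    (hVi1 : ‖Vi - 1‖ ≤ 1)
    (hc₁ : c₁ = 1 + ‖(1 : Matrix (Fin n) (Fin n) ℝ)‖)
    (hWr : ‖Wr‖ ≤ b)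
    (hViV : Vi * (1 + r⁻¹ • Wr) = 1)
    (hFF : F * Fi = 1)
    (hYinv : Yinv = r⁻¹ • (Vi * Fi)) :
    ‖Y'r * Yinv - r⁻¹ • 1‖ ≤
      ((n * C₂ * (n * c₁ * ‖Fi‖)) + n * ‖F‖ * (n * (n * c₁ * b) * ‖Fi‖)) * ‖r ^ (-(2:ℝ))‖ := by
  have hr0 : (0:ℝ) < r := lt_of_lt_of_le one_pos hr1
  have hc₁0 : 0 ≤ c₁ := by rw [hc₁]; positivity
  have hrinv1 : r⁻¹ ≤ 1 := by
    rw [inv_le_one_iff₀]; right; exact hr1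
  have hrinv0 : (0:ℝ) ≤ r⁻¹ := (inv_pos.mpr hr0).le
  have hnorm2 : ‖r ^ (-(2:ℝ))‖ = r⁻¹ * r⁻¹ := by
    rw [Real.norm_eq_abs, abs_of_pos (Real.rpow_pos_of_pos hr0 _),
      Real.rpow_neg hr0.le, show ((2:ℝ) = ((2:ℕ):ℝ)) by norm_num, Real.rpow_natCast,
      pow_succ, pow_one, mul_inv]
  have hVin : ‖Vi‖ ≤ c₁ := by
    calc ‖Vi‖ = ‖Vi - 1 + 1‖ := by rw [sub_add_cancel]
      _ ≤ ‖Vi - 1‖ + ‖(1 : Matrix (Fin n) (Fin n) ℝ)‖ := norm_add_le _ _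
      _ ≤ c₁ := by rw [hc₁]; linarith
  have hVid : Vi - 1 = -(Vi * (r⁻¹ • Wr)) := by
    rw [mul_add, mul_one] at hViV
    rw [← hViV]; abel
  have hVi1b : ‖Vi - 1‖ ≤ n * c₁ * (b * r⁻¹) := by
    rw [hVid, norm_neg]
    calc ‖Vi * (r⁻¹ • Wr)‖ ≤ n * ‖Vi‖ * ‖r⁻¹ • Wr‖ := matrix_norm_mul_le _ _
      _ ≤ n * c₁ * (b * r⁻¹) := by
          rw [norm_smul, Real.norm_eq_abs, abs_of_pos (inv_pos.mpr hr0)]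
          have h1 : r⁻¹ * ‖Wr‖ ≤ b * r⁻¹ := by
            rw [mul_comm]
            exact mul_le_mul_of_nonneg_right hWr hrinv0
          have h2 : (n:ℝ) * ‖Vi‖ ≤ n * c₁ :=
            mul_le_mul_of_nonneg_left hVin (Nat.cast_nonneg n)
          exact mul_le_mul h2 h1 (by positivity) (by positivity)
  have hsmul : Y'r * Yinv - r⁻¹ • 1 = r⁻¹ • (Y'r * (Vi * Fi) - 1) := by
    rw [hYinv, Matrix.mul_smul, smul_sub]
  have hTid : Y'r * (Vi * Fi) - 1 = (Y'r - F) * (Vi * Fi) + F * ((Vi - 1) * Fi) := by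
    rw [sub_mul, sub_mul, one_mul, mul_sub, ← mul_assoc, hFF]
    abel
  have hViFi : ‖Vi * Fi‖ ≤ n * c₁ * ‖Fi‖ := by
    calc ‖Vi * Fi‖ ≤ n * ‖Vi‖ * ‖Fi‖ := matrix_norm_mul_le _ _
      _ ≤ n * c₁ * ‖Fi‖ := by gcongr
  have ht1 : ‖(Y'r - F) * (Vi * Fi)‖ ≤ n * (C₂ * (r⁻¹ * r⁻¹)) * (n * c₁ * ‖Fi‖) := by
    calc ‖(Y'r - F) * (Vi * Fi)‖ ≤ n * ‖Y'r - F‖ * ‖Vi * Fi‖ := matrix_norm_mul_le _ _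
      _ ≤ n * (C₂ * (r⁻¹ * r⁻¹)) * (n * c₁ * ‖Fi‖) := by
          exact mul_le_mul (mul_le_mul_of_nonneg_left hY'F (Nat.cast_nonneg n)) hViFi
            (norm_nonneg _) (by positivity)
  have ht2 : ‖F * ((Vi - 1) * Fi)‖ ≤ n * ‖F‖ * (n * (n * c₁ * (b * r⁻¹)) * ‖Fi‖) := by
    calc ‖F * ((Vi - 1) * Fi)‖ ≤ n * ‖F‖ * ‖(Vi - 1) * Fi‖ := matrix_norm_mul_le _ _
      _ ≤ n * ‖F‖ * (n * (n * c₁ * (b * r⁻¹)) * ‖Fi‖) := by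
          refine mul_le_mul_of_nonneg_left ?_ (by positivity)
          calc ‖(Vi - 1) * Fi‖ ≤ n * ‖Vi - 1‖ * ‖Fi‖ := matrix_norm_mul_le _ _
            _ ≤ n * (n * c₁ * (b * r⁻¹)) * ‖Fi‖ := by gcongr
  have hT : ‖Y'r * (Vi * Fi) - 1‖ ≤
      (n * C₂ * (n * c₁ * ‖Fi‖)) * (r⁻¹ * r⁻¹) + (n * ‖F‖ * (n * (n * c₁ * b) * ‖Fi‖)) * r⁻¹ := by
    rw [hTid]
    refine le_trans (norm_add_le _ _) ?_
    have e1 : (n:ℝ) * (C₂ * (r⁻¹ * r⁻¹)) * (n * c₁ * ‖Fi‖)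
        = (n * C₂ * (n * c₁ * ‖Fi‖)) * (r⁻¹ * r⁻¹) := by ring
    have e2 : (n:ℝ) * ‖F‖ * (n * (n * c₁ * (b * r⁻¹)) * ‖Fi‖)
        = (n * ‖F‖ * (n * (n * c₁ * b) * ‖Fi‖)) * r⁻¹ := by ring
    rw [e1] at ht1; rw [e2] at ht2
    linarith
  rw [hsmul, norm_smul, Real.norm_eq_abs, abs_of_pos (inv_pos.mpr hr0), hnorm2]
  have hA0 : (0:ℝ) ≤ n * C₂ * (n * c₁ * ‖Fi‖) := by positivity
  have hB0 : (0:ℝ) ≤ n * ‖F‖ * (n * (n * c₁ * b) * ‖Fi‖) := by positivity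
  have key := mul_le_mul_of_nonneg_left hT hrinv0
  have e3 : r⁻¹ * ((n * C₂ * (n * c₁ * ‖Fi‖)) * (r⁻¹ * r⁻¹)
      + (n * ‖F‖ * (n * (n * c₁ * b) * ‖Fi‖)) * r⁻¹)
      ≤ (n * C₂ * (n * c₁ * ‖Fi‖) + n * ‖F‖ * (n * (n * c₁ * b) * ‖Fi‖)) * (r⁻¹ * r⁻¹) := by
    have h4 : r⁻¹ * ((n * C₂ * (n * c₁ * ‖Fi‖)) * (r⁻¹ * r⁻¹))
        ≤ (n * C₂ * (n * c₁ * ‖Fi‖)) * (r⁻¹ * r⁻¹) := by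
      nlinarith [mul_nonneg (sub_nonneg.mpr hrinv1) (mul_nonneg hA0 (mul_nonneg hrinv0 hrinv0))]
    have h5 : r⁻¹ * ((n * ‖F‖ * (n * (n * c₁ * b) * ‖Fi‖)) * r⁻¹)
        = (n * ‖F‖ * (n * (n * c₁ * b) * ‖Fi‖)) * (r⁻¹ * r⁻¹) := by ring
    rw [mul_add, h5, add_mul]
    linarith
  linarith

/-- If `Y'' = -H·Y` with `H = O(r^(-ν))`, `ν ≥ 4`, and the limit
`F = lim_{r→∞} Y'(r)` is invertible, then `Y(r)` is invertible for all
sufficiently large `r` and `L(r) = Y'(r)·Y(r)⁻¹` satisfies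
`L(r) = (1/r)·I + O(r⁻²)` as `r → ∞`. -/
theorem optical_matrix_asymptotics_of_invertible_limit
    (n : ℕ) (hn : 1 ≤ n)
    (ν : ℝ) (hν : 4 ≤ ν)
    (r₀ : ℝ) (hr₀ : 0 < r₀)
    (H : ℝ → Matrix (Fin n) (Fin n) ℝ)
    (hHcont : ContinuousOn H (Ici r₀))
    (hH : H =O[atTop] fun r : ℝ => r ^ (-ν))
    (Y Y' Y'' : ℝ → Matrix (Fin n) (Fin n) ℝ)
    (hY' : ∀ r ∈ Ici r₀, HasDerivWithinAt Y (Y' r) (Ici r₀) r)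
    (hY'' : ∀ r ∈ Ici r₀, HasDerivWithinAt Y' (Y'' r) (Ici r₀) r)
    (heq : ∀ r ∈ Ici r₀, Y'' r = -(H r * Y r))
    (F : Matrix (Fin n) (Fin n) ℝ)
    (hF : Tendsto Y' atTop (nhds F))
    (hFinv : IsUnit F) :
    (∀ᶠ r : ℝ in atTop, IsUnit (Y r)) ∧
      ((fun r : ℝ => Y' r * (Y r)⁻¹ - r⁻¹ • (1 : Matrix (Fin n) (Fin n) ℝ))
        =O[atTop] fun r : ℝ => r ^ (-(2 : ℝ))) := by
  have hYc : ContinuousOn Y (Ici r₀) := fun r hr => (hY' r hr).continuousWithinAt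
  have hY'c : ContinuousOn Y' (Ici r₀) := fun r hr => (hY'' r hr).continuousWithinAt
  -- Step 1: `Y'` is bounded on `[r₀, ∞)`.
  obtain ⟨M, hM0, hM⟩ : ∃ M, 0 ≤ M ∧ ∀ r ∈ Ici r₀, ‖Y' r‖ ≤ M := by
    have h1 : ∀ᶠ r : ℝ in atTop, ‖Y' r‖ ≤ ‖F‖ + 1 :=
      hF.norm.eventually (eventually_le_nhds (lt_add_one ‖F‖))
    obtain ⟨R₁, hR₁⟩ := eventually_atTop.mp h1
    obtain ⟨M₀, hM₀⟩ := (isCompact_Icc (a := r₀) (b := R₁)).exists_bound_of_continuousOn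
      (hY'c.mono Icc_subset_Ici_self)
    refine ⟨max (max M₀ (‖F‖ + 1)) 0, le_max_right _ _, fun r hr => ?_⟩
    rcases le_total r R₁ with h | h
    · exact le_trans (hM₀ r ⟨hr, h⟩) (le_trans (le_max_left _ _) (le_max_left _ _))
    · exact le_trans (hR₁ r h) (le_trans (le_max_right _ _) (le_max_left _ _))
  -- Step 2: linear growth of `Y`.
  have hYlin : ∀ r ∈ Ici r₀, ‖Y r‖ ≤ ‖Y r₀‖ + M * (r - r₀) := by
    intro r hr
    have key := norm_image_sub_le_of_norm_deriv_right_le_segment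
      (f := Y) (f' := Y') (a := r₀) (b := r) (C := M)
      (hYc.mono (Icc_subset_Ici_self))
      (fun x hx => (hY' x hx.1).mono (Ici_subset_Ici.mpr hx.1))
      (fun x hx => hM x hx.1)
      r ⟨hr, le_refl r⟩
    calc ‖Y r‖ = ‖Y r₀ + (Y r - Y r₀)‖ := by rw [add_sub_cancel]
      _ ≤ ‖Y r₀‖ + ‖Y r - Y r₀‖ := norm_add_le _ _
      _ ≤ ‖Y r₀‖ + M * (r - r₀) := by linarith
  set K : ℝ := ‖Y r₀‖ + M with hKdef
  have hK0 : 0 ≤ K := by positivity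
  have hYK : ∀ r, max r₀ 1 ≤ r → ‖Y r‖ ≤ K * r := by
    intro r hr
    have h1 : (1:ℝ) ≤ r := le_trans (le_max_right _ _) hr
    have h0 : r₀ ≤ r := le_trans (le_max_left _ _) hr
    have := hYlin r h0
    have hY0 : (0:ℝ) ≤ ‖Y r₀‖ := norm_nonneg _
    rw [hKdef]
    nlinarith
  -- Step 3: bound on `H`.
  obtain ⟨C, hC0, R_H, hCH⟩ : ∃ C, 0 ≤ C ∧ ∃ R : ℝ, ∀ r, R ≤ r → 1 ≤ r →
      ‖H r‖ ≤ C * r ^ (-ν) := by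
    obtain ⟨c, hc⟩ := hH.isBigOWith
    rw [IsBigOWith, eventually_atTop] at hc
    obtain ⟨R, hR⟩ := hc
    refine ⟨max c 0, le_max_right _ _, R, fun r hr h1 => ?_⟩
    have hr0 : (0:ℝ) < r := lt_of_lt_of_le one_pos h1
    have := hR r hr
    have hpow : ‖r ^ (-ν)‖ = r ^ (-ν) := by
      rw [Real.norm_eq_abs, abs_of_pos (Real.rpow_pos_of_pos hr0 _)]
    rw [hpow] at this
    calc ‖H r‖ ≤ c * r ^ (-ν) := this
      _ ≤ max c 0 * r ^ (-ν) :=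
          mul_le_mul_of_nonneg_right (le_max_left _ _) (Real.rpow_pos_of_pos hr0 _).le
  set R₂ : ℝ := max (max r₀ 1) R_H with hR₂def
  have hR₂r₀ : r₀ ≤ R₂ := le_trans (le_max_left _ _) (le_max_left _ _)
  have hR₂1 : (1:ℝ) ≤ R₂ := le_trans (le_max_right r₀ 1) (le_max_left _ _)
  set C₁ : ℝ := n * C * K with hC₁def
  have hC₁0 : 0 ≤ C₁ := by positivity
  -- Step 4: bound on `Y''`.
  have hY''b : ∀ r, R₂ ≤ r → ‖Y'' r‖ ≤ C₁ * (r⁻¹ * r⁻¹ * r⁻¹) := by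
    intro r hr
    have h1 : (1:ℝ) ≤ r := le_trans hR₂1 hr
    have hr0 : (0:ℝ) < r := lt_of_lt_of_le one_pos h1
    have hrr₀ : r₀ ≤ r := le_trans hR₂r₀ hr
    have hrRH : R_H ≤ r := le_trans (le_max_right _ _) hr
    have hYr : ‖Y r‖ ≤ K * r := hYK r (le_trans (le_max_left _ _) hr)
    have hHr : ‖H r‖ ≤ C * r ^ (-ν) := hCH r hrRH h1
    have hmain : ‖Y'' r‖ ≤ C₁ * (r ^ (-ν) * r) := by
      rw [heq r hrr₀, norm_neg]
      calc ‖H r * Y r‖ ≤ n * ‖H r‖ * ‖Y r‖ := matrix_norm_mul_le _ _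
        _ ≤ n * (C * r ^ (-ν)) * (K * r) := by
            have hn0 : (0:ℝ) ≤ n := Nat.cast_nonneg n
            exact mul_le_mul (mul_le_mul_of_nonneg_left hHr hn0) hYr (norm_nonneg _)
              (by positivity)
        _ = C₁ * (r ^ (-ν) * r) := by rw [hC₁def]; ring
    refine le_trans hmain (mul_le_mul_of_nonneg_left ?_ hC₁0)
    have e1 : r ^ (-ν) * r = r ^ (-ν + 1) := by
      rw [Real.rpow_add hr0, Real.rpow_one]
    have e2 : r ^ (-ν + 1) ≤ r ^ (-(3:ℝ)) :=
      Real.rpow_le_rpow_of_exponent_le h1 (by linarith)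
    have e3 : r ^ (-(3:ℝ)) = r⁻¹ * r⁻¹ * r⁻¹ := by
      rw [Real.rpow_neg hr0.le, show ((3:ℝ) = ((3:ℕ):ℝ)) by norm_num, Real.rpow_natCast,
        pow_succ, pow_succ, pow_one, mul_inv, mul_inv]
    rw [e1]; rw [e3] at e2; exact e2
  set C₂ : ℝ := C₁ / 2 with hC₂def
  have hC₂0 : 0 ≤ C₂ := by positivity
  -- Step 5: `Y' r - F = O(r⁻²)` with explicit constant.
  have hY'F : ∀ r, R₂ ≤ r → ‖Y' r - F‖ ≤ C₂ * (r⁻¹ * r⁻¹) := by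
    intro r hr
    have hrr₀ : r₀ ≤ r := le_trans hR₂r₀ hr
    have hr0 : (0:ℝ) < r := lt_of_lt_of_le (lt_of_lt_of_le one_pos hR₂1) hr
    have key : ∀ s, r ≤ s → ‖Y' s - Y' r‖ ≤ C₂ * (r⁻¹ * r⁻¹) := by
      intro s hs
      set B : ℝ → ℝ := fun t => C₂ * (r⁻¹ * r⁻¹) - C₂ * (t⁻¹ * t⁻¹) with hBdef
      have hB' : ∀ t ∈ Ico r s, HasDerivWithinAt B (C₁ * (t⁻¹ * t⁻¹ * t⁻¹)) (Ici t) t := by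
        intro t ht
        have ht0 : t ≠ 0 := (lt_of_lt_of_le hr0 ht.1).ne'
        have h1 : HasDerivAt (fun t : ℝ => t⁻¹ * t⁻¹)
            (-(t ^ 2)⁻¹ * t⁻¹ + t⁻¹ * -(t ^ 2)⁻¹) t :=
          (hasDerivAt_inv ht0).mul (hasDerivAt_inv ht0)
        have h2 : HasDerivAt B (0 - C₂ * (-(t ^ 2)⁻¹ * t⁻¹ + t⁻¹ * -(t ^ 2)⁻¹)) t :=
          (hasDerivAt_const t (C₂ * (r⁻¹ * r⁻¹))).sub (h1.const_mul C₂)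
        have h3 : 0 - C₂ * (-(t ^ 2)⁻¹ * t⁻¹ + t⁻¹ * -(t ^ 2)⁻¹) = C₁ * (t⁻¹ * t⁻¹ * t⁻¹) := by
          rw [hC₂def]; field_simp; ring
        exact (h3 ▸ h2).hasDerivWithinAt
      have hf' : ∀ t ∈ Ico r s, HasDerivWithinAt (fun t => Y' t - Y' r) (Y'' t) (Ici t) t := by
        intro t ht
        have h := (((hY'' t (le_trans hrr₀ ht.1)).mono
          (Ici_subset_Ici.mpr (le_trans hrr₀ ht.1))).sub
          (hasDerivWithinAt_const t (Ici t) (Y' r)))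
        rw [sub_zero] at h; exact h
      have hbound : ∀ t ∈ Ico r s, ‖Y'' t‖ ≤ C₁ * (t⁻¹ * t⁻¹ * t⁻¹) :=
        fun t ht => hY''b t (le_trans hr ht.1)
      have hcont : ContinuousOn (fun t => Y' t - Y' r) (Icc r s) :=
        (hY'c.mono (fun t ht => le_trans hrr₀ ht.1)).sub continuousOn_const
      have hBcont : ContinuousOn B (Icc r s) := by
        apply ContinuousOn.sub continuousOn_const
        apply ContinuousOn.mul continuousOn_const
        have : ∀ t ∈ Icc r s, t ≠ 0 := fun t ht => (lt_of_lt_of_le hr0 ht.1).ne'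
        exact ((continuousOn_id.inv₀ this).mul (continuousOn_id.inv₀ this))
      have hBa : ‖Y' r - Y' r‖ ≤ B r := by simp [hBdef]
      have := image_norm_le_of_norm_deriv_right_le_deriv_boundary'
        hcont hf' hBa hBcont hB' hbound (Set.right_mem_Icc.mpr hs)
      calc ‖Y' s - Y' r‖ ≤ B s := this
        _ ≤ C₂ * (r⁻¹ * r⁻¹) := by
            have hs0 : (0:ℝ) < s := lt_of_lt_of_le hr0 hs
            have : 0 ≤ C₂ * (s⁻¹ * s⁻¹) := by positivity
            simp only [hBdef]; linarith
    have hlim : Tendsto (fun s => ‖Y' s - Y' r‖) atTop (nhds ‖F - Y' r‖) :=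
      (hF.sub tendsto_const_nhds).norm
    have := le_of_tendsto hlim (eventually_atTop.mpr ⟨r, key⟩)
    rwa [norm_sub_rev] at this
  -- Step 6: `Y r - r • F` is bounded.
  obtain ⟨a, ha0, hYa⟩ : ∃ a, 0 ≤ a ∧ ∀ r, R₂ ≤ r → ‖Y r - r • F‖ ≤ a := by
    have hR₂0 : (0:ℝ) < R₂ := lt_of_lt_of_le one_pos hR₂1
    refine ⟨‖Y R₂ - R₂ • F‖ + C₂ * R₂⁻¹, by positivity, fun r hr => ?_⟩
    set B : ℝ → ℝ := fun t => C₂ * R₂⁻¹ - C₂ * t⁻¹ with hBdef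
    have hB' : ∀ t ∈ Ico R₂ r, HasDerivWithinAt B (C₂ * (t⁻¹ * t⁻¹)) (Ici t) t := by
      intro t ht
      have ht0 : t ≠ 0 := (lt_of_lt_of_le hR₂0 ht.1).ne'
      have h2 : HasDerivAt B (0 - C₂ * (-(t ^ 2)⁻¹)) t :=
        (hasDerivAt_const t _).sub ((hasDerivAt_inv ht0).const_mul C₂)
      have h3 : 0 - C₂ * (-(t ^ 2)⁻¹) = C₂ * (t⁻¹ * t⁻¹) := by
        rw [zero_sub, mul_neg, neg_neg, sq, mul_inv]
      exact (h3 ▸ h2).hasDerivWithinAt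
    have hf' : ∀ t ∈ Ico R₂ r, HasDerivWithinAt (fun t => Y t - t • F - (Y R₂ - R₂ • F))
        (Y' t - F) (Ici t) t := by
      intro t ht
      have htr₀ : r₀ ≤ t := le_trans hR₂r₀ ht.1
      have h1 : HasDerivWithinAt (fun t : ℝ => t • F) ((1:ℝ) • F) (Ici t) t :=
        ((hasDerivAt_id t).smul_const F).hasDerivWithinAt
      have h := (((hY' t htr₀).mono (Ici_subset_Ici.mpr htr₀)).sub h1).sub
        (hasDerivWithinAt_const t (Ici t) (Y R₂ - R₂ • F))
      rw [one_smul, sub_zero] at h; exact h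
    have hbound : ∀ t ∈ Ico R₂ r, ‖Y' t - F‖ ≤ C₂ * (t⁻¹ * t⁻¹) := fun t ht => hY'F t ht.1
    have hcont : ContinuousOn (fun t => Y t - t • F - (Y R₂ - R₂ • F)) (Icc R₂ r) := by
      apply ContinuousOn.sub _ continuousOn_const
      exact (hYc.mono (fun t ht => le_trans hR₂r₀ ht.1)).sub
        (continuousOn_id.smul continuousOn_const)
    have hBcont : ContinuousOn B (Icc R₂ r) := by
      apply ContinuousOn.sub continuousOn_const
      apply ContinuousOn.mul continuousOn_const
      exact continuousOn_id.inv₀ (fun t ht => (lt_of_lt_of_le hR₂0 ht.1).ne')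
    have hBa : ‖Y R₂ - R₂ • F - (Y R₂ - R₂ • F)‖ ≤ B R₂ := by
      simp only [sub_self, norm_zero, hBdef]
      exact le_rfl
    have key := image_norm_le_of_norm_deriv_right_le_deriv_boundary'
      hcont hf' hBa hBcont hB' hbound (Set.right_mem_Icc.mpr hr)
    have hr0 : (0:ℝ) < r := lt_of_lt_of_le hR₂0 hr
    have h1 : 0 ≤ C₂ * r⁻¹ := by positivity
    calc ‖Y r - r • F‖ = ‖Y r - r • F - (Y R₂ - R₂ • F) + (Y R₂ - R₂ • F)‖ := by
          rw [sub_add_cancel]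
      _ ≤ ‖Y r - r • F - (Y R₂ - R₂ • F)‖ + ‖Y R₂ - R₂ • F‖ := norm_add_le _ _
      _ ≤ B r + ‖Y R₂ - R₂ • F‖ := by linarith [key]
      _ ≤ ‖Y R₂ - R₂ • F‖ + C₂ * R₂⁻¹ := by simp only [hBdef]; linarith
  -- inverse of F
  have hFdet : IsUnit F.det := (Matrix.isUnit_iff_isUnit_det F).mp hFinv
  have hFF : F * F⁻¹ = 1 := Matrix.mul_nonsing_inv F hFdet
  set W : ℝ → Matrix (Fin n) (Fin n) ℝ := fun r => F⁻¹ * (Y r - r • F) with hWdef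
  set b : ℝ := n * ‖F⁻¹‖ * a with hbdef
  have hb0 : 0 ≤ b := by positivity
  have hWb : ∀ r, R₂ ≤ r → ‖W r‖ ≤ b := by
    intro r hr
    refine le_trans (matrix_norm_mul_le _ _) ?_
    have h2 : (0:ℝ) ≤ (n:ℝ) * ‖F⁻¹‖ := by positivity
    calc (n:ℝ) * ‖F⁻¹‖ * ‖Y r - r • F‖ ≤ n * ‖F⁻¹‖ * a :=
          mul_le_mul_of_nonneg_left (hYa r hr) h2
      _ = b := rfl
  set V : ℝ → Matrix (Fin n) (Fin n) ℝ := fun r => 1 + r⁻¹ • W r with hVdef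
  have hYFV : ∀ r, R₂ ≤ r → Y r = F * (r • V r) := by
    intro r hr
    have hr0 : (0:ℝ) < r := lt_of_lt_of_le (lt_of_lt_of_le one_pos hR₂1) hr
    show Y r = F * (r • (1 + r⁻¹ • (F⁻¹ * (Y r - r • F))))
    rw [smul_add, mul_add, smul_smul, mul_inv_cancel₀ hr0.ne', one_smul,
      Matrix.mul_smul, mul_one, ← mul_assoc, hFF, one_mul]
    abel
  -- V tends to 1
  have hV1 : Tendsto V atTop (nhds 1) := by
    have h0 : Tendsto (fun r : ℝ => r⁻¹ • W r) atTop (nhds 0) := by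
      refine squeeze_zero_norm' (a := fun r : ℝ => b * r⁻¹) ?_ ?_
      · filter_upwards [eventually_ge_atTop R₂, eventually_gt_atTop 0] with r hr hr0
        rw [norm_smul, Real.norm_eq_abs, abs_of_pos (inv_pos.mpr hr0), mul_comm]
        exact mul_le_mul_of_nonneg_right (hWb r hr) (inv_pos.mpr hr0).le
      · simpa using tendsto_inv_atTop_zero.const_mul b
    simpa using tendsto_const_nhds.add h0
  have hdetV : Tendsto (fun r => (V r).det) atTop (nhds 1) := by
    have cdet : Continuous fun A : Matrix (Fin n) (Fin n) ℝ => A.det :=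
      continuous_id.matrix_det
    simpa [Function.comp_def] using (cdet.tendsto 1).comp hV1
  have hdetne : ∀ᶠ r : ℝ in atTop, (V r).det ≠ 0 := hdetV.eventually_ne one_ne_zero
  have hVinv1 : Tendsto (fun r => (V r)⁻¹) atTop (nhds 1) := by
    have cinv : ContinuousAt Inv.inv (1 : Matrix (Fin n) (Fin n) ℝ) := by
      refine continuousAt_matrix_inv _ ?_
      rw [Matrix.det_one]
      have : (Ring.inverse : ℝ → ℝ) = Inv.inv := by funext x; exact Ring.inverse_eq_inv x
      rw [this]
      exact continuousAt_inv₀ one_ne_zero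
    simpa [Function.comp_def] using cinv.tendsto.comp hV1
  have hVib : ∀ᶠ r : ℝ in atTop, ‖(V r)⁻¹ - 1‖ ≤ 1 := by
    have := hVinv1 (Metric.closedBall_mem_nhds (1 : Matrix (Fin n) (Fin n) ℝ) one_pos)
    filter_upwards [this] with r hr
    rw [mem_preimage, Metric.mem_closedBall, dist_eq_norm] at hr
    exact hr
  set c₁ : ℝ := 1 + ‖(1 : Matrix (Fin n) (Fin n) ℝ)‖ with hc₁def
  have hc₁0 : 0 ≤ c₁ := by positivity
  -- eventual invertibility of Y
  have hUnit : ∀ᶠ r : ℝ in atTop, IsUnit (Y r) := by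
    filter_upwards [eventually_ge_atTop R₂, eventually_gt_atTop 0, hdetne] with r h1 h2 h3
    rw [Matrix.isUnit_iff_isUnit_det, hYFV r h1, Matrix.det_mul, Matrix.det_smul,
      isUnit_iff_ne_zero]
    simp only [ne_eq, mul_eq_zero, not_or]
    exact ⟨hFdet.ne_zero, pow_ne_zero _ h2.ne', h3⟩
  refine ⟨hUnit, ?_⟩
  -- the inverse formula
  have hYinv : ∀ᶠ r : ℝ in atTop, (Y r)⁻¹ = r⁻¹ • ((V r)⁻¹ * F⁻¹) := by
    filter_upwards [eventually_ge_atTop R₂, eventually_gt_atTop 0, hdetne] with r h1 h2 h3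
    have hVV : V r * (V r)⁻¹ = 1 := Matrix.mul_nonsing_inv (V r) (isUnit_iff_ne_zero.mpr h3)
    apply Matrix.inv_eq_right_inv
    rw [hYFV r h1]
    calc F * (r • V r) * (r⁻¹ • ((V r)⁻¹ * F⁻¹))
        = (r⁻¹ * r) • (F * V r * ((V r)⁻¹ * F⁻¹)) := by
          rw [Matrix.mul_smul, Matrix.mul_smul, Matrix.smul_mul, smul_smul]
      _ = 1 := by
          rw [inv_mul_cancel₀ h2.ne', one_smul, mul_assoc, ← mul_assoc (V r), hVV,
            one_mul, hFF]
  -- final estimate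
  rw [isBigO_iff]
  refine ⟨(n * C₂ * (n * c₁ * ‖F⁻¹‖)) + n * ‖F‖ * (n * (n * c₁ * b) * ‖F⁻¹‖), ?_⟩
  filter_upwards [eventually_ge_atTop R₂, eventually_ge_atTop 1, hdetne, hVib, hYinv]
    with r hrR₂ hr1 hdet hVib' hYinv'
  have hViV : (V r)⁻¹ * (1 + r⁻¹ • W r) = 1 :=
    Matrix.nonsing_inv_mul (V r) (isUnit_iff_ne_zero.mpr hdet)
  exact optical_final_bound n r C₂ c₁ b hr1 hC₂0 hb0 (Y' r) F ((V r)⁻¹) F⁻¹ (W r) ((Y r)⁻¹)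
    (hY'F r hrR₂) hVib' hc₁def (hWb r hrR₂) hViV hFF hYinv'
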